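/- (Lemma 1, case RR > 1.) Let 0 < p_0 < p_1 < 1. Then for every λ with 0 ≤ λ ≤ 1, the risk ratio RR = p_1/p_0 satisfies RR < WR(λ), where WR(λ) := W_λ(p_1)/W_λ(p_0). Consequently B(λ) := max{RR/WR(λ), WR(λ)/RR} equals WR(λ)/RR. -/

import Mathlib

/-- The Aranda-Ordaz transformation `W_λ(θ)`: equals `((1-θ)^(-λ) - 1)/λ` for `λ ≠ 0`
and `-log(1-θ)` for `λ = 0`. -/
noncomputable def arandaOrdaz (l θ : ℝ) : ℝ :=
  if l = 0 then -Real.log (1 - θ) else ((1 - θ) ^ (-l) - 1) / l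

/-- The transformation-based ratio `WR(λ) = W_λ(p₁)/W_λ(p₀)`. -/
noncomputable def WR (p₀ p₁ l : ℝ) : ℝ := arandaOrdaz l p₁ / arandaOrdaz l p₀

/-- The relative discrepancy `B(λ) = max{RR/WR(λ), WR(λ)/RR}` with `RR = p₁/p₀`. -/
noncomputable def B (p₀ p₁ l : ℝ) : ℝ :=
  max ((p₁ / p₀) / WR p₀ p₁ l) (WR p₀ p₁ l / (p₁ / p₀))

lemma ao_zero (l : ℝ) : arandaOrdaz l 0 = 0 := by
  unfold arandaOrdaz
  split <;> simp [Real.one_rpow]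

lemma ao_pos (l : ℝ) {p : ℝ} (hl : 0 ≤ l) (h0 : 0 < p) (h1 : p < 1) :
    0 < arandaOrdaz l p := by
  unfold arandaOrdaz
  rcases eq_or_lt_of_le hl with h | h
  · rw [if_pos h.symm]
    have : Real.log (1 - p) < 0 :=
      Real.log_neg (by linarith) (by linarith)
    linarith
  · rw [if_neg (ne_of_gt h)]
    have h1p : (0:ℝ) < 1 - p := by linarith
    have h2 : 1 < (1 - p) ^ (-l) :=
      Real.one_lt_rpow_of_pos_of_lt_one_of_neg h1p (by linarith) (by linarith)
    exact div_pos (by linarith) h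

lemma hasDerivAt_ao (l : ℝ) {x : ℝ} (hl : 0 ≤ l) (hx : x < 1) :
    HasDerivAt (arandaOrdaz l) ((1 - x) ^ (-(l + 1)) : ℝ) x := by
  have h1x : (0:ℝ) < 1 - x := by linarith
  rcases eq_or_lt_of_le hl with h | h
  · have : HasDerivAt (fun y : ℝ => -Real.log (1 - y)) ((1 - x)⁻¹) x := by
      have h1 : HasDerivAt (fun y : ℝ => 1 - y) (-1) x := by
        simpa using (hasDerivAt_id x).const_sub 1
      have h2 := (Real.hasDerivAt_log (ne_of_gt h1x)).comp x h1
      exact h2.neg.congr_deriv (by ring)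
    have heq : arandaOrdaz l = fun y : ℝ => -Real.log (1 - y) := by
      funext y; unfold arandaOrdaz; rw [if_pos h.symm]
    rw [heq, ← h]
    simpa [Real.rpow_neg_one] using this
  · have hl0 : l ≠ 0 := ne_of_gt h
    have h1 : HasDerivAt (fun y : ℝ => 1 - y) (-1) x := by
      simpa using (hasDerivAt_id x).const_sub 1
    have h2 : HasDerivAt (fun y : ℝ => y ^ (-l)) (-l * (1 - x) ^ (-l - 1)) (1 - x) :=
      Real.hasDerivAt_rpow_const (Or.inl (ne_of_gt h1x))
    have h3 := (h2.comp x h1)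
    have h4 := (h3.sub_const 1).div_const l
    have heq : arandaOrdaz l = fun y : ℝ => ((1 - y) ^ (-l) - 1) / l := by
      funext y; unfold arandaOrdaz; rw [if_neg hl0]
    rw [heq]
    refine h4.congr_deriv ?_
    rw [show -(l + 1) = -l - 1 by ring, neg_mul, mul_neg_one, neg_neg, mul_div_cancel_left₀ _ hl0]

lemma ao_strictConvex (l : ℝ) (hl : 0 ≤ l) :
    StrictConvexOn ℝ (Set.Ico (0:ℝ) 1) (arandaOrdaz l) := by
  apply StrictMonoOn.strictConvexOn_of_deriv (convex_Ico 0 1)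
  · intro x hx
    exact (hasDerivAt_ao l hl hx.2).continuousAt.continuousWithinAt
  · rw [interior_Ico]
    intro x hx y hy hxy
    rw [(hasDerivAt_ao l hl hx.2).deriv, (hasDerivAt_ao l hl hy.2).deriv]
    exact Real.rpow_lt_rpow_of_neg (by linarith [hy.2]) (by linarith) (by linarith)

/-- Lemma 1, case RR > 1: if `0 < p₀ < p₁ < 1`, then for all `λ ∈ [0,1]`,
`RR < WR(λ)`, and consequently `B(λ) = WR(λ)/RR`. -/
theorem lemma1_RR_gt_one (p₀ p₁ : ℝ) (h0 : 0 < p₀) (h01 : p₀ < p₁) (h1 : p₁ < 1) :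
    ∀ l : ℝ, 0 ≤ l → l ≤ 1 →
      p₁ / p₀ < WR p₀ p₁ l ∧ B p₀ p₁ l = WR p₀ p₁ l / (p₁ / p₀) := by
  intro l hl0 hl1
  have h0' : (0:ℝ) < p₁ := lt_trans h0 h01
  have hp0lt1 : p₀ < 1 := lt_trans h01 h1
  have hconv := ao_strictConvex l hl0
  have hsec := hconv.secant_strict_mono (a := 0) (x := p₀) (y := p₁)
    ⟨le_refl 0, one_pos⟩ ⟨h0.le, hp0lt1⟩ ⟨h0'.le, h1⟩ (ne_of_gt h0) (ne_of_gt h0') h01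
  rw [ao_zero] at hsec
  simp only [sub_zero] at hsec
  have hA0 := ao_pos l hl0 h0 hp0lt1
  have hA1 := ao_pos l hl0 h0' h1
  have hRRltWR : p₁ / p₀ < WR p₀ p₁ l := by
    rw [div_lt_div_iff₀ h0 h0'] at hsec
    unfold WR
    rw [div_lt_div_iff₀ h0 hA0]
    nlinarith
  refine ⟨hRRltWR, ?_⟩
  have hRR1 : 1 < p₁ / p₀ := (one_lt_div h0).mpr h01
  have hRRpos : 0 < p₁ / p₀ := by linarith
  have hWRpos : 0 < WR p₀ p₁ l := lt_trans hRRpos hRRltWR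
  unfold B
  apply max_eq_right
  have h2 : (p₁ / p₀) / WR p₀ p₁ l < 1 := (div_lt_one hWRpos).mpr hRRltWR
  have h3 : 1 < WR p₀ p₁ l / (p₁ / p₀) := (one_lt_div hRRpos).mpr hRRltWR
  linarith
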